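/- Let p → 0, x = x(p) ∈ [−p, 1−p], and ε = ε(p) ∈ (0, 1]. If |x| ≥ ε·p, then I_p(p + x) = Ω(ε·|x|). -/

import Mathlib

/-- The relative entropy I_p(x) = x log(x/p) + (1-x) log((1-x)/(1-p)). -/
noncomputable def Ip (p x : ℝ) : ℝ :=
  x * Real.log (x / p) + (1 - x) * Real.log ((1 - x) / (1 - p))

lemma mul_log_div_eq {c t : ℝ} (hc : c ≠ 0) :
    t * Real.log (t / c) = t * Real.log t - t * Real.log c := by
  rcases eq_or_ne t 0 with rfl | ht
  · simp
  · rw [Real.log_div ht hc]; ring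

/-- Expansion of `Ip` into products with logs (valid including degenerate endpoints). -/
lemma Ip_eq (b t : ℝ) (hb : b ≠ 0) (hb1 : b ≠ 1) :
    Ip b t = (t * Real.log t - t * Real.log b)
      + ((1 - t) * Real.log (1 - t) - (1 - t) * Real.log (1 - b)) := by
  have h1 : (1 : ℝ) - b ≠ 0 := sub_ne_zero.2 (Ne.symm hb1)
  rw [Ip, mul_log_div_eq hb, mul_log_div_eq h1]

/-- For `0 ≤ a ≤ b < 1`, `Ip b a ≥ (b-a)^2/(2b)`. -/
lemma kl_left {b : ℝ} (hb : 0 < b) (hb1 : b < 1) {a : ℝ} (ha0 : 0 ≤ a) (hab : a ≤ b) :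
    (b - a) ^ 2 / (2 * b) ≤ Ip b a := by
  set Φ : ℝ → ℝ := fun t => (t * Real.log t - t * Real.log b)
      + ((1 - t) * Real.log (1 - t) - (1 - t) * Real.log (1 - b)) - (b - t) ^ 2 / (2 * b) with hΦ
  have hIp : ∀ t, Ip b t = Φ t + (b - t) ^ 2 / (2 * b) := by
    intro t
    rw [Ip_eq b t hb.ne' hb1.ne, hΦ]; ring
  have hcont : Continuous Φ := by
    apply Continuous.sub
    · apply Continuous.add
      · exact Real.continuous_mul_log.sub (continuous_id.mul continuous_const)
      · exact (Real.continuous_mul_log.comp (continuous_const.sub continuous_id)).sub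
          ((continuous_const.sub continuous_id).mul continuous_const)
    · exact (((continuous_const.sub continuous_id).pow 2)).div_const _
  have hderiv : ∀ t ∈ Set.Ioo (0 : ℝ) b, HasDerivAt Φ
      (Real.log t - Real.log b - Real.log (1 - t) + Real.log (1 - b) + (b - t) / b) t := by
    intro t ht
    have ht0 : (0 : ℝ) < t := ht.1
    have ht1 : t < 1 := lt_of_lt_of_le ht.2 hb1.le
    have h1 : HasDerivAt (fun t : ℝ => t * Real.log t) (Real.log t + 1) t :=
      Real.hasDerivAt_mul_log ht0.ne'
    have h2 : HasDerivAt (fun t : ℝ => t * Real.log b) (Real.log b) t :=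
      hasDerivAt_mul_const _
    have hinner : HasDerivAt (fun t : ℝ => 1 - t) (-1) t := by
      simpa using (hasDerivAt_id t).const_sub 1
    have h3 : HasDerivAt (fun t : ℝ => (1 - t) * Real.log (1 - t))
        ((Real.log (1 - t) + 1) * (-1)) t := by
      exact (Real.hasDerivAt_mul_log (by linarith : (1:ℝ) - t ≠ 0)).comp t hinner
    have h4 : HasDerivAt (fun t : ℝ => (1 - t) * Real.log (1 - b)) ((-1) * Real.log (1 - b)) t :=
      hinner.mul_const _
    have h5 : HasDerivAt (fun t : ℝ => (b - t) ^ 2 / (2 * b))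
        ((2 * (b - t) ^ 1 * (-1)) / (2 * b)) t := by
      have : HasDerivAt (fun t : ℝ => b - t) (-1) t := by
        simpa using (hasDerivAt_id t).const_sub b
      exact (this.pow 2).div_const _
    have := ((h1.sub h2).add (h3.sub h4)).sub h5
    refine this.congr_deriv ?_
    ring
  have hanti : AntitoneOn Φ (Set.Icc 0 b) := by
    apply antitoneOn_of_deriv_nonpos (convex_Icc 0 b) hcont.continuousOn
    · intro t ht
      rw [interior_Icc] at ht
      exact (hderiv t ht).differentiableAt.differentiableWithinAt
    · intro t ht
      rw [interior_Icc] at ht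
      rw [(hderiv t ht).deriv]
      have ht0 : (0 : ℝ) < t := ht.1
      have htb : t < b := ht.2
      have l1 : Real.log t - Real.log b ≤ t / b - 1 := by
        have := Real.log_le_sub_one_of_pos (div_pos ht0 hb)
        rwa [Real.log_div ht0.ne' hb.ne'] at this
      have l2 : Real.log (1 - b) ≤ Real.log (1 - t) :=
        Real.log_le_log (by linarith) (by linarith)
      have l3 : t / b - 1 + (b - t) / b = 0 := by field_simp; ring
      linarith
  have h0 : Φ b ≤ Φ a :=
    hanti (Set.mem_Icc.2 ⟨ha0, hab⟩) (Set.mem_Icc.2 ⟨hb.le, le_refl b⟩) hab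
  have hΦb : Φ b = 0 := by simp [hΦ]
  have hpos : 0 ≤ Φ a := le_of_eq_of_le hΦb.symm h0
  rw [hIp a]
  exact le_add_of_nonneg_left hpos
/-- For `0 < b ≤ a ≤ 1`, `Ip b a ≥ (a-b)^2/(2a)`. -/
lemma kl_right {b : ℝ} (hb : 0 < b) (hb1 : b < 1) {a : ℝ} (hab : b ≤ a) (ha1 : a ≤ 1) :
    (a - b) ^ 2 / (2 * a) ≤ Ip b a := by
  set Ψ : ℝ → ℝ := fun t => (t * Real.log t - t * Real.log b)
      + ((1 - t) * Real.log (1 - t) - (1 - t) * Real.log (1 - b)) - (t - b) ^ 2 / (2 * t) with hΨ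
  have hIp : ∀ t, Ip b t = Ψ t + (t - b) ^ 2 / (2 * t) := by
    intro t
    rw [Ip_eq b t hb.ne' hb1.ne, hΨ]; ring
  have hcont : ContinuousOn Ψ (Set.Icc b 1) := by
    apply ContinuousOn.sub
    · apply Continuous.continuousOn
      apply Continuous.add
      · exact Real.continuous_mul_log.sub (continuous_id.mul continuous_const)
      · exact (Real.continuous_mul_log.comp (continuous_const.sub continuous_id)).sub
          ((continuous_const.sub continuous_id).mul continuous_const)
    · apply ContinuousOn.div
      · exact (((continuous_id.sub continuous_const).pow 2)).continuousOn
      · exact (continuous_const.mul continuous_id).continuousOn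
      · intro t ht
        have : (0:ℝ) < t := lt_of_lt_of_le hb ht.1
        positivity
  have hderiv : ∀ t ∈ Set.Ioo b 1, HasDerivAt Ψ
      (Real.log t - Real.log b - Real.log (1 - t) + Real.log (1 - b)
        - ((2 * (t - b) ^ 1 * 1) * (2 * t) - (t - b) ^ 2 * 2) / (2 * t) ^ 2) t := by
    intro t ht
    have ht0 : (0 : ℝ) < t := lt_of_lt_of_le hb ht.1.le
    have ht1 : t < 1 := ht.2
    have h1 : HasDerivAt (fun t : ℝ => t * Real.log t) (Real.log t + 1) t :=
      Real.hasDerivAt_mul_log ht0.ne'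
    have h2 : HasDerivAt (fun t : ℝ => t * Real.log b) (Real.log b) t :=
      hasDerivAt_mul_const _
    have hinner : HasDerivAt (fun t : ℝ => 1 - t) (-1) t := by
      simpa using (hasDerivAt_id t).const_sub 1
    have h3 : HasDerivAt (fun t : ℝ => (1 - t) * Real.log (1 - t))
        ((Real.log (1 - t) + 1) * (-1)) t :=
      (Real.hasDerivAt_mul_log (by linarith : (1:ℝ) - t ≠ 0)).comp t hinner
    have h4 : HasDerivAt (fun t : ℝ => (1 - t) * Real.log (1 - b)) ((-1) * Real.log (1 - b)) t :=
      hinner.mul_const _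
    have hnum : HasDerivAt (fun t : ℝ => (t - b) ^ 2) (2 * (t - b) ^ 1 * 1) t := by
      exact (by simpa using (hasDerivAt_id t).sub_const b : HasDerivAt (fun t : ℝ => t - b) 1 t).pow 2
    have hden : HasDerivAt (fun t : ℝ => 2 * t) 2 t := by
      simpa using (hasDerivAt_id t).const_mul 2
    have h5 : HasDerivAt (fun t : ℝ => (t - b) ^ 2 / (2 * t))
        (((2 * (t - b) ^ 1 * 1) * (2 * t) - (t - b) ^ 2 * 2) / (2 * t) ^ 2) t :=
      hnum.div hden (by positivity)
    have := ((h1.sub h2).add (h3.sub h4)).sub h5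
    refine this.congr_deriv ?_
    ring
  have hmono : MonotoneOn Ψ (Set.Icc b 1) := by
    apply monotoneOn_of_deriv_nonneg (convex_Icc b 1) hcont
    · intro t ht
      rw [interior_Icc] at ht
      exact (hderiv t ht).differentiableAt.differentiableWithinAt
    · intro t ht
      rw [interior_Icc] at ht
      rw [(hderiv t ht).deriv]
      have ht0 : (0 : ℝ) < t := lt_of_lt_of_le hb ht.1.le
      have htb : b < t := ht.1
      have ht1 : t < 1 := ht.2
      have l1 : Real.log b - Real.log t ≤ b / t - 1 := by
        have := Real.log_le_sub_one_of_pos (div_pos hb ht0)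
        rwa [Real.log_div hb.ne' ht0.ne'] at this
      have l2 : Real.log (1 - t) ≤ Real.log (1 - b) :=
        Real.log_le_log (by linarith) (by linarith)
      have l3 : (1 - b / t) - ((2 * (t - b) ^ 1 * 1) * (2 * t) - (t - b) ^ 2 * 2) / (2 * t) ^ 2
          = (t - b) ^ 2 / (2 * t ^ 2) := by
        field_simp
        ring
      have l4 : (0:ℝ) ≤ (t - b) ^ 2 / (2 * t ^ 2) := by positivity
      linarith
  have h0 : Ψ b ≤ Ψ a :=
    hmono (Set.mem_Icc.2 ⟨le_refl b, hb1.le⟩) (Set.mem_Icc.2 ⟨hab, ha1⟩) hab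
  have hΨb : Ψ b = 0 := by simp [hΨ]
  have hpos : 0 ≤ Ψ a := le_of_eq_of_le hΨb.symm h0
  rw [hIp a]
  exact le_add_of_nonneg_left hpos

/-- Uniformly for small p, x ∈ [-p, 1-p] and ε ∈ (0,1] with |x| ≥ εp, one has
I_p(p + x) = Ω(ε |x|). -/
theorem Ip_first_moment_lower_bound :
    ∃ C : ℝ, 0 < C ∧ ∃ p₀ : ℝ, 0 < p₀ ∧
      ∀ p : ℝ, 0 < p → p < p₀ →
        ∀ x : ℝ, x ∈ Set.Icc (-p) (1 - p) →
          ∀ ε : ℝ, 0 < ε → ε ≤ 1 → ε * p ≤ |x| →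
            C * (ε * |x|) ≤ Ip p (p + x) := by
  refine ⟨1/4, by norm_num, 1/2, by norm_num, ?_⟩
  intro p hp hp2 x hx ε hε hε1 hεx
  obtain ⟨hx1, hx2⟩ := hx
  have hp1 : p < 1 := by linarith
  rcases le_or_gt x 0 with hxneg | hxpos
  · -- x ≤ 0 : use kl_left with a = p + x ∈ [0, p]
    have habs : |x| = -x := abs_of_nonpos hxneg
    have ha0 : 0 ≤ p + x := by linarith
    have hab : p + x ≤ p := by linarith
    have key := kl_left hp hp1 ha0 hab
    have heq : (p - (p + x)) ^ 2 = x ^ 2 := by ring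
    rw [heq] at key
    refine le_trans ?_ key
    rw [habs, le_div_iff₀ (by positivity)]
    nlinarith [mul_le_mul_of_nonneg_left hεx (neg_nonneg.2 hxneg),
      mul_le_mul_of_nonneg_right hε1 (sq_nonneg x)]
  · -- x > 0 : use kl_right with a = p + x ∈ [p, 1]
    have habs : |x| = x := abs_of_pos hxpos
    have hab : p ≤ p + x := by linarith
    have ha1 : p + x ≤ 1 := by linarith
    have key := kl_right hp hp1 hab ha1
    have heq : (p + x - p) ^ 2 = x ^ 2 := by ring
    rw [heq] at key
    refine le_trans ?_ key
    rw [habs, le_div_iff₀ (by positivity)]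
    rw [habs] at hεx
    nlinarith [mul_le_mul_of_nonneg_left hεx hxpos.le,
      mul_le_mul_of_nonneg_right hε1 (sq_nonneg x)]
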